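/- Let l ≥ 3 and let R₊ = {e_i : 1 ≤ i ≤ l} ∪ {e_i − e_j : 1 ≤ i < j ≤ l} ∪ {e_i + e_j : 1 ≤ i < j ≤ l} ⊂ ℝ^l (the positive roots of type B_l). Then for every nonzero H ∈ ℝ^l that is not proportional to any element of R₊, the set S_H = {v_H(α) : α ∈ R₊, ⟪α,H⟫ ≠ 0}, where v_H(α) = α/⟪α,H⟫ − H/‖H‖², is NOT invariant under negation: S_H ≠ −S_H. -/

import Mathlib

open scoped RealInnerProductSpace

/-- For the restricted root system of type `B_l` (`l ≥ 3`), no orbit other than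
those through restricted root vectors is austere: for every nonzero `H` not
proportional to any positive root, the set `S_H = {α/⟪α,H⟫ - H/‖H‖²}` is not
invariant under negation. -/
theorem stmt_14 (l : ℕ) (hl : 3 ≤ l)
    (Rp : Set (EuclideanSpace ℝ (Fin l)))
    (hRp : Rp = {x | (∃ i : Fin l, x = EuclideanSpace.single i (1 : ℝ)) ∨
      ∃ i j : Fin l, i < j ∧
        (x = EuclideanSpace.single i (1 : ℝ) - EuclideanSpace.single j 1 ∨
         x = EuclideanSpace.single i (1 : ℝ) + EuclideanSpace.single j 1)})
    (H : EuclideanSpace ℝ (Fin l)) (hH : H ≠ 0)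
    (hprop : ∀ α ∈ Rp, ∀ c : ℝ, H ≠ c • α)
    (S : Set (EuclideanSpace ℝ (Fin l)))
    (hS : S = {y | ∃ α ∈ Rp, ⟪α, H⟫ ≠ 0 ∧ y = (⟪α, H⟫)⁻¹ • α - (‖H‖ ^ 2)⁻¹ • H}) :
    (fun y => -y) '' S ≠ S := by
  intro hSneg
  classical
  have hnorm : (‖H‖ ^ 2 : ℝ) ≠ 0 := pow_ne_zero 2 (norm_ne_zero_iff.mpr hH)
  set c : ℝ := 2 * (‖H‖ ^ 2)⁻¹ with hc_def
  have hc : c ≠ 0 := mul_ne_zero two_ne_zero (inv_ne_zero hnorm)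
  have hzero : ∀ p : Fin l, c * H p = 0 → H p = 0 := fun p h =>
    (mul_eq_zero.mp h).resolve_left hc
  -- key pairing property from S = -S
  have key : ∀ α ∈ Rp, ⟪α, H⟫ ≠ 0 → ∃ β ∈ Rp, ⟪β, H⟫ ≠ 0 ∧
      ∀ p, (⟪α, H⟫)⁻¹ * α p + (⟪β, H⟫)⁻¹ * β p = c * H p := by
    intro α hα ha
    have hy : (⟪α, H⟫)⁻¹ • α - (‖H‖ ^ 2)⁻¹ • H ∈ S := by
      rw [hS]; exact ⟨α, hα, ha, rfl⟩
    have hy2 : -((⟪α, H⟫)⁻¹ • α - (‖H‖ ^ 2)⁻¹ • H) ∈ S := by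
      rw [← hSneg]; exact ⟨_, hy, rfl⟩
    rw [hS] at hy2
    obtain ⟨β, hβ, hb, heq⟩ := hy2
    refine ⟨β, hβ, hb, fun p => ?_⟩
    have h := congrArg (fun v : EuclideanSpace ℝ (Fin l) => v p) heq
    simp only [PiLp.neg_apply, PiLp.sub_apply, PiLp.smul_apply, smul_eq_mul] at h
    rw [hc_def]; linarith
  -- normalized representation of roots
  have pairrep : ∀ β ∈ Rp, (∃ m, β = EuclideanSpace.single m (1:ℝ)) ∨
      ∃ m k : Fin l, ∃ σ : ℝ, m ≠ k ∧ (σ = 1 ∨ σ = -1) ∧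
        β = EuclideanSpace.single m (1:ℝ) + σ • EuclideanSpace.single k 1 := by
    intro β hβ
    rw [hRp] at hβ
    rcases hβ with ⟨m, rfl⟩ | ⟨m, k, hmk, rfl | rfl⟩
    · exact Or.inl ⟨m, rfl⟩
    · exact Or.inr ⟨m, k, -1, hmk.ne, Or.inr rfl, by module⟩
    · exact Or.inr ⟨m, k, 1, hmk.ne, Or.inl rfl, by module⟩
  -- coordinates of the building blocks
  have hsco : ∀ (m : Fin l) (p : Fin l),
      (EuclideanSpace.single m (1:ℝ) : EuclideanSpace ℝ (Fin l)) p
        = if p = m then 1 else 0 := by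
    intro m p; simp [EuclideanSpace.single_apply]
  have hpco : ∀ (u v : Fin l) (σ : ℝ) (p : Fin l),
      (EuclideanSpace.single u (1:ℝ) + σ • EuclideanSpace.single v 1 :
        EuclideanSpace ℝ (Fin l)) p
        = (if p = u then 1 else 0) + σ * (if p = v then 1 else 0) := by
    intro u v σ p; simp [EuclideanSpace.single_apply]
  have hsin : ∀ m : Fin l, ⟪(EuclideanSpace.single m (1:ℝ)), H⟫ = H m := by
    intro m; simp [EuclideanSpace.inner_single_left]
  have hpin : ∀ (u v : Fin l) (σ : ℝ),
      ⟪EuclideanSpace.single u (1:ℝ) + σ • EuclideanSpace.single v 1, H⟫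
        = H u + σ * H v := by
    intro u v σ
    simp [inner_add_left, inner_smul_left, EuclideanSpace.inner_single_left]
  -- H not proportional to single roots
  have h1 : ∀ i : Fin l, (∀ p, p ≠ i → H p = 0) → False := by
    intro i hsupp
    refine hprop (EuclideanSpace.single i 1) (by rw [hRp]; exact Or.inl ⟨i, rfl⟩) (H i) ?_
    ext p
    simp only [PiLp.smul_apply, EuclideanSpace.single_apply, smul_eq_mul]
    by_cases hp : p = i
    · subst hp; simp
    · simp [hp, hsupp p hp]
  -- H not proportional to generalized pair roots (ordered)
  have hproot : ∀ (i j : Fin l), i < j → ∀ σ : ℝ, (σ = 1 ∨ σ = -1) → ∀ d : ℝ,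
      H ≠ d • (EuclideanSpace.single i 1 + σ • EuclideanSpace.single j 1) := by
    intro i j hij σ hσ d
    rcases hσ with rfl | rfl
    · have := hprop (EuclideanSpace.single i 1 + EuclideanSpace.single j 1)
        (by rw [hRp]; exact Or.inr ⟨i, j, hij, Or.inr rfl⟩) d
      simpa using this
    · have := hprop (EuclideanSpace.single i 1 - EuclideanSpace.single j 1)
        (by rw [hRp]; exact Or.inr ⟨i, j, hij, Or.inl rfl⟩) d
      intro hcon
      apply this
      rw [hcon]; module
  -- H not supported on two coordinates with equal-or-opposite values
  have h2 : ∀ i j : Fin l, i ≠ j → ∀ σ : ℝ, (σ = 1 ∨ σ = -1) → H j = σ * H i →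
      (∀ p, p ≠ i → p ≠ j → H p = 0) → False := by
    intro i j hij σ hσ hji hsupp
    have hσσ : σ * σ = 1 := by rcases hσ with rfl | rfl <;> norm_num
    rcases hij.lt_or_gt with hlt | hlt
    · refine hproot i j hlt σ hσ (H i) ?_
      ext p
      simp only [PiLp.smul_apply, PiLp.add_apply, EuclideanSpace.single_apply, smul_eq_mul]
      by_cases hpi : p = i
      · subst hpi; rw [if_pos rfl, if_neg hij]; ring
      · by_cases hpj : p = j
        · subst hpj; rw [if_neg hpi, if_pos rfl, hji]; ring
        · rw [if_neg hpi, if_neg hpj, hsupp p hpi hpj]; ring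
    · refine hproot j i hlt σ hσ (H j) ?_
      ext p
      simp only [PiLp.smul_apply, PiLp.add_apply, EuclideanSpace.single_apply, smul_eq_mul]
      by_cases hpj : p = j
      · subst hpj; rw [if_pos rfl, if_neg (Ne.symm hij)]; ring
      · by_cases hpi : p = i
        · subst hpi; rw [if_neg hpj, if_pos rfl, hji]
          linear_combination (-(H p)) * hσσ
        · rw [if_neg hpj, if_neg hpi, hsupp p hpi hpj]; ring
  -- 2-coordinate support with both values nonzero is impossible (uses l ≥ 3)
  have step2 : ∀ i j : Fin l, i ≠ j → H i ≠ 0 → H j ≠ 0 →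
      (∀ p, p ≠ i → p ≠ j → H p = 0) → False := by
    intro i j hij hi hj hsupp
    obtain ⟨k, hki, hkj⟩ : ∃ k : Fin l, k ≠ i ∧ k ≠ j := by
      by_contra hcon
      push_neg at hcon
      have hsub : (Finset.univ : Finset (Fin l)) ⊆ {i, j} := by
        intro x _
        rcases eq_or_ne x i with rfl | hxi
        · simp
        · simp [hcon x hxi]
      have hcard : l ≤ ({i, j} : Finset (Fin l)).card := by
        simpa using Finset.card_le_card hsub
      have h2' : ({i, j} : Finset (Fin l)).card ≤ 2 :=
        (Finset.card_insert_le _ _).trans (by simp)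
      omega
    have hk0 : H k = 0 := hsupp k hki hkj
    have hmem : (EuclideanSpace.single i (1:ℝ) + EuclideanSpace.single k 1) ∈ Rp := by
      rw [hRp]
      rcases (Ne.symm hki).lt_or_gt with h' | h'
      · exact Or.inr ⟨i, k, h', Or.inr rfl⟩
      · exact Or.inr ⟨k, i, h', Or.inr (by rw [add_comm])⟩
    have hainner : ⟪EuclideanSpace.single i (1:ℝ) + EuclideanSpace.single k 1, H⟫ = H i := by
      simp [inner_add_left, EuclideanSpace.inner_single_left, hk0]
    obtain ⟨β, hβ, hb, E⟩ := key _ hmem (by rw [hainner]; exact hi)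
    rw [hainner] at E
    have hαco : ∀ p, (EuclideanSpace.single i (1:ℝ) + EuclideanSpace.single k 1 :
        EuclideanSpace ℝ (Fin l)) p
        = (if p = i then 1 else 0) + (if p = k then 1 else 0) := by
      intro p; simp [EuclideanSpace.single_apply]
    have hβj : β j ≠ 0 := by
      intro h0
      have hE := E j
      rw [hαco j, if_neg (Ne.symm hij), if_neg (Ne.symm hkj), h0] at hE
      exact hj (hzero j (by linear_combination -hE))
    have hβk : β k ≠ 0 := by
      intro h0
      have hE := E k
      rw [hαco k, if_neg hki, if_pos rfl, h0, hk0] at hE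
      have : (H i)⁻¹ = 0 := by linear_combination hE
      exact hi (inv_eq_zero.mp this)
    rcases pairrep β hβ with ⟨m, rfl⟩ | ⟨u, v, σ, huv, hσ, rfl⟩
    · have hjm : j = m := by
        by_contra h'
        exact hβj (by simp [hsco, h'])
      have hkm : k = m := by
        by_contra h'
        exact hβk (by simp [hsco, h'])
      exact hkj (hkm.trans hjm.symm)
    · have hσ0 : σ ≠ 0 := by rcases hσ with rfl | rfl <;> norm_num
      have hσσ : σ * σ = 1 := by rcases hσ with rfl | rfl <;> norm_num
      rw [hpin u v σ] at E hb
      have hj' : j = u ∨ j = v := by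
        by_contra h'
        push_neg at h'
        exact hβj (by rw [hpco u v σ j, if_neg h'.1, if_neg h'.2]; ring)
      have hk' : k = u ∨ k = v := by
        by_contra h'
        push_neg at h'
        exact hβk (by rw [hpco u v σ k, if_neg h'.1, if_neg h'.2]; ring)
      have e2 : c * (H j * H j) = 1 := by
        rcases hj' with rfl | rfl
        · -- u = j, so v = k
          rcases hk' with rfl | rfl
          · exact absurd rfl hkj
          · have hE := E j
            rw [hαco j, hpco j k σ j, if_neg (Ne.symm hij), if_neg (Ne.symm hkj),
              if_pos rfl, hk0] at hE
            norm_num at hE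
            field_simp at hE; linear_combination -hE
        · -- v = j, so u = k
          rcases hk' with rfl | rfl
          · have hE := E j
            rw [hαco j, hpco k j σ j, if_neg (Ne.symm hij), if_neg (Ne.symm hkj),
              if_pos rfl, hk0] at hE
            norm_num at hE
            field_simp at hE
            linear_combination -hE
          · exact absurd rfl hkj
      have e1 : c * (H i * H i) = 1 := by
        have hiu : ¬ i = u := by
          rcases hj' with rfl | rfl
          · exact hij
          · rcases hk' with rfl | rfl
            · exact fun h => hki h.symm
            · exact absurd rfl hkj
        have hiv : ¬ i = v := by
          rcases hj' with rfl | rfl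
          · rcases hk' with rfl | rfl
            · exact absurd rfl hkj
            · exact fun h => hki h.symm
          · exact hij
        have hE := E i
        rw [hαco i, hpco u v σ i, if_pos rfl, if_neg (fun h => hki h.symm),
          if_neg hiu, if_neg hiv] at hE
        norm_num at hE
        field_simp at hE; linear_combination -hE
      have hsq : H j * H j = H i * H i := mul_left_cancel₀ hc (e2.trans e1.symm)
      rcases mul_self_eq_mul_self_iff.mp hsq with h' | h'
      · exact h2 i j hij 1 (Or.inl rfl) (by rw [h']; ring) hsupp
      · exact h2 i j hij (-1) (Or.inr rfl) (by rw [h']; ring) hsupp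
  -- main argument
  obtain ⟨i₀, hi₀⟩ : ∃ p, H p ≠ 0 := by
    by_contra h; push_neg at h; exact hH (by ext p; exact h p)
  have hmem₀ : EuclideanSpace.single i₀ (1:ℝ) ∈ Rp := by
    rw [hRp]; exact Or.inl ⟨i₀, rfl⟩
  obtain ⟨β, hβ, hb, E⟩ := key _ hmem₀ (by rw [hsin i₀]; exact hi₀)
  rw [hsin i₀] at E
  rcases pairrep β hβ with ⟨m, rfl⟩ | ⟨m, k, σ, hmk, hσ, rfl⟩
  · -- β is a single root
    rw [hsin m] at E hb
    by_cases him : m = i₀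
    · subst him
      apply h1 m
      intro p hp
      have hE := E p
      rw [hsco m p, if_neg hp] at hE
      exact hzero p (by linear_combination -hE)
    · apply step2 i₀ m (fun h => him h.symm) hi₀ hb
      intro p hpi hpm
      have hE := E p
      rw [hsco i₀ p, hsco m p, if_neg hpi, if_neg hpm] at hE
      exact hzero p (by linear_combination -hE)
  · -- β is a pair root
    rw [hpin m k σ] at E hb
    have hσ0 : σ ≠ 0 := by rcases hσ with rfl | rfl <;> norm_num
    have hσσ : σ * σ = 1 := by rcases hσ with rfl | rfl <;> norm_num
    have hsupp3 : ∀ p, p ≠ i₀ → p ≠ m → p ≠ k → H p = 0 := by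
      intro p hpi hpm hpk
      have hE := E p
      rw [hsco i₀ p, hpco m k σ p, if_neg hpi, if_neg hpm, if_neg hpk] at hE
      exact hzero p (by linear_combination -hE)
    by_cases him : i₀ = m
    · subst him
      by_cases hk0 : H k = 0
      · apply h1 i₀
        intro p hp
        by_cases hpk : p = k
        · rw [hpk]; exact hk0
        · exact hsupp3 p hp hp hpk
      · apply step2 i₀ k hmk hi₀ hk0
        intro p hpi hpk
        exact hsupp3 p hpi hpi hpk
    · by_cases hik : i₀ = k
      · subst hik
        by_cases hm0 : H m = 0
        · apply h1 i₀
          intro p hp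
          by_cases hpm : p = m
          · rw [hpm]; exact hm0
          · exact hsupp3 p hp hpm hp
        · apply step2 i₀ m him hi₀ hm0
          intro p hpi hpm
          exact hsupp3 p hpi hpm hpi
      · -- genuine 3-coordinate support
        have hEm := E m
        rw [hsco i₀ m, hpco m k σ m, if_neg (fun h => him h.symm), if_pos rfl,
          if_neg hmk] at hEm
        have hEm' : (H m + σ * H k)⁻¹ = c * H m := by linear_combination hEm
        have h5 : c * H m * (H m + σ * H k) = 1 := by
          rw [← hEm']; exact inv_mul_cancel₀ hb
        have hEk := E k
        rw [hsco i₀ k, hpco m k σ k, if_neg (fun h => hik h.symm),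
          if_neg (fun h => hmk h.symm), if_pos rfl] at hEk
        have hEk' : (H m + σ * H k)⁻¹ * σ = c * H k := by linear_combination hEk
        have h6 : c * H k * (H m + σ * H k) = σ := by
          rw [← hEk', mul_right_comm, inv_mul_cancel₀ hb, one_mul]
        have h7 : (c * (H m + σ * H k)) * H k = (c * (H m + σ * H k)) * (σ * H m) := by
          linear_combination h6 - σ * h5
        have hkm : H k = σ * H m := mul_left_cancel₀ (mul_ne_zero hc hb) h7
        have hbB : H m + σ * H k = 2 * H m := by
          rw [hkm]; linear_combination (H m) * hσσ
        have e_first : 2 * (c * (H m * H m)) = 1 := by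
          rw [hbB] at h5; linear_combination h5
        have hm0 : H m ≠ 0 := by
          intro h; rw [h] at e_first; norm_num at e_first
        have hk0 : H k ≠ 0 := by rw [hkm]; exact mul_ne_zero hσ0 hm0
        -- second application of the pairing, to the single root e_m
        have hmem' : EuclideanSpace.single m (1:ℝ) ∈ Rp := by
          rw [hRp]; exact Or.inl ⟨m, rfl⟩
        obtain ⟨β', hβ', hb', E'⟩ := key _ hmem' (by rw [hsin m]; exact hm0)
        rw [hsin m] at E'
        rcases pairrep β' hβ' with ⟨u, rfl⟩ | ⟨u, v, τ, huv, hτ, rfl⟩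
        · rw [hsin u] at E' hb'
          have hiu : i₀ = u := by
            by_contra h'
            have hE := E' i₀
            rw [hsco m i₀, hsco u i₀, if_neg him, if_neg h'] at hE
            exact hi₀ (hzero i₀ (by linear_combination -hE))
          have hku : k = u := by
            by_contra h'
            have hE := E' k
            rw [hsco m k, hsco u k, if_neg (fun h => hmk h.symm), if_neg h'] at hE
            exact hk0 (hzero k (by linear_combination -hE))
          exact hik (hiu.trans hku.symm)
        · rw [hpin u v τ] at E' hb'
          have hi' : i₀ = u ∨ i₀ = v := by
            by_contra h'
            push_neg at h'
            have hE := E' i₀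
            rw [hsco m i₀, hpco u v τ i₀, if_neg him, if_neg h'.1, if_neg h'.2] at hE
            exact hi₀ (hzero i₀ (by linear_combination -hE))
          have hk' : k = u ∨ k = v := by
            by_contra h'
            push_neg at h'
            have hE := E' k
            rw [hsco m k, hpco u v τ k, if_neg (fun h => hmk h.symm),
              if_neg h'.1, if_neg h'.2] at hE
            exact hk0 (hzero k (by linear_combination -hE))
          have hmu : ¬ m = u := by
            rcases hi' with rfl | rfl
            · exact fun h => him h.symm
            · rcases hk' with rfl | rfl
              · exact fun h => hmk h
              · exact absurd rfl hik
          have hmv : ¬ m = v := by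
            rcases hi' with rfl | rfl
            · rcases hk' with rfl | rfl
              · exact absurd rfl hik
              · exact fun h => hmk h
            · exact fun h => him h.symm
          have hE := E' m
          rw [hsco m m, hpco u v τ m, if_pos rfl, if_neg hmu, if_neg hmv] at hE
          have hinv : (H m)⁻¹ = c * H m := by linear_combination hE
          have e_second : c * (H m * H m) = 1 := by
            have h8 : (H m)⁻¹ * H m = (c * H m) * H m := by rw [hinv]
            rw [inv_mul_cancel₀ hm0] at h8
            linear_combination -h8
          linarith [e_first, e_second]
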